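/- Let k be a real number with 0 < k < 1/N_F, and let M_S : [0,∞) → ℝ be a nonnegative continuous function such that γM_S(t) ≥ (1/k − 1)·M(t) for all t ≥ 0. If M, F : [0,∞) → ℝ are continuously differentiable, nonnegative, and satisfy M'(t) = rρ·(F(t)M(t)/(M(t)+γM_S(t)))·e^{−β(M(t)+F(t))} − μ_M M(t) and F'(t) = (1−r)ρ·(F(t)M(t)/(M(t)+γM_S(t)))·e^{−β(M(t)+F(t))} − μ_F F(t) for all t ≥ 0, then (M(t), F(t)) converges exponentially to (0,0): there exist C > 0 and ε > 0 with M(t) + F(t) ≤ C e^{−εt} for all t ≥ 0. -/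

import Mathlib

set_option maxHeartbeats 1000000 in
theorem stmt_11 (r ρ β μM μF γ : ℝ)
    (hr0 : 0 < r) (hr1 : r < 1) (hρ : 0 < ρ) (hβ : 0 < β)
    (hμM : 0 < μM) (hμF : 0 < μF) (hγ : 0 < γ) (hμ : μF ≤ μM)
    (k : ℝ) (hk0 : 0 < k) (hk1 : k < 1 / ((1 - r) * ρ / μF))
    (M F MS : ℝ → ℝ)
    (hMSc : Continuous MS) (hMSnn : ∀ t, 0 ≤ t → 0 ≤ MS t)
    (hMSk : ∀ t, 0 ≤ t → γ * MS t ≥ (1 / k - 1) * M t)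
    (hMnn : ∀ t, 0 ≤ t → 0 ≤ M t) (hFnn : ∀ t, 0 ≤ t → 0 ≤ F t)
    (hdM : ∀ t, 0 ≤ t →
      HasDerivAt M (r * ρ * (F t * M t / (M t + γ * MS t)) *
        Real.exp (-(β * (M t + F t))) - μM * M t) t)
    (hdF : ∀ t, 0 ≤ t →
      HasDerivAt F ((1 - r) * ρ * (F t * M t / (M t + γ * MS t)) *
        Real.exp (-(β * (M t + F t))) - μF * F t) t) :
    ∃ C > 0, ∃ ε > 0, ∀ t, 0 ≤ t → M t + F t ≤ C * Real.exp (-(ε * t)) := by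
  have h1r : 0 < 1 - r := by linarith
  have hN : 0 < (1 - r) * ρ / μF := by positivity
  have h2 : k * ((1 - r) * ρ / μF) < 1 := (lt_div_iff₀ hN).mp hk1
  have hδ : (1 - r) * ρ * k < μF := by
    have h3 := mul_lt_mul_of_pos_right h2 hμF
    have h4 : k * ((1 - r) * ρ / μF) * μF = (1 - r) * ρ * k := by
      field_simp
    rw [h4, one_mul] at h3; exact h3
  set δ := μF - (1 - r) * ρ * k with hδdef
  have hδ0 : 0 < δ := by rw [hδdef]; linarith
  have hδeq : δ = μF - (1 - r) * ρ * k := hδdef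
  set c := max 1 (2 * r * ρ * k / δ) with hc
  have hc1 : (1:ℝ) ≤ c := le_max_left _ _
  have hc0 : (0:ℝ) < c := lt_of_lt_of_le one_pos hc1
  have hc2 : 2 * r * ρ * k / δ ≤ c := le_max_right _ _
  set ε := min μM (δ / 2) with hε
  have hε0 : 0 < ε := lt_min hμM (by linarith)
  have hεμM : ε ≤ μM := min_le_left _ _
  have hεδ : ε ≤ δ / 2 := min_le_right _ _
  have hcδ : r * ρ * k ≤ c * (δ - ε) := by
    have h5 : 2 * r * ρ * k / δ * δ ≤ c * δ :=
      mul_le_mul_of_nonneg_right hc2 hδ0.le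
    have h6 : 2 * r * ρ * k / δ * δ = 2 * r * ρ * k := by field_simp
    nlinarith [mul_le_mul_of_nonneg_left hεδ hc0.le]
  have key : ∀ t, 0 ≤ t →
      (r * ρ * (F t * M t / (M t + γ * MS t)) * Real.exp (-(β * (M t + F t))) - μM * M t)
      + c * ((1 - r) * ρ * (F t * M t / (M t + γ * MS t)) * Real.exp (-(β * (M t + F t))) - μF * F t)
      ≤ -ε * (M t + c * F t) := by
    intro t ht
    have hM := hMnn t ht
    have hF := hFnn t ht
    have hMS := hMSnn t ht
    set R := F t * M t / (M t + γ * MS t) with hR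
    have hR0 : 0 ≤ R := div_nonneg (mul_nonneg hF hM) (by positivity)
    have hRk : R ≤ k * F t := by
      rcases eq_or_lt_of_le hM with h0 | h0
      · rw [hR, ← h0, mul_zero, zero_div]; positivity
      · have hden : M t / k ≤ M t + γ * MS t := by
          have hks := hMSk t ht
          have hmk : M t / k = M t + (1/k - 1) * M t := by field_simp; ring
          linarith
        have hdk : 0 < M t / k := by positivity
        have h5 : R ≤ F t * M t / (M t / k) :=
          div_le_div_of_nonneg_left (mul_nonneg hF hM) hdk hden
        have h6 : F t * M t / (M t / k) = k * F t := by
          rw [div_div_eq_mul_div]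
          field_simp
        linarith [h6 ▸ h5]
    have hexp1 : Real.exp (-(β * (M t + F t))) ≤ 1 := by
      rw [Real.exp_le_one_iff]; nlinarith
    have hexp0 : 0 < Real.exp (-(β * (M t + F t))) := Real.exp_pos _
    set e := Real.exp (-(β * (M t + F t))) with heq
    have hRe : R * e ≤ k * F t := by nlinarith
    have hcoef : (0:ℝ) ≤ (r + c * (1 - r)) * ρ := by positivity
    have h1 : (r + c * (1 - r)) * ρ * (R * e) ≤ (r + c * (1 - r)) * ρ * (k * F t) :=
      mul_le_mul_of_nonneg_left hRe hcoef
    have h2 : 0 ≤ (μM - ε) * M t := mul_nonneg (by linarith) hM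
    have hcδ' : r * ρ * k ≤ c * (μF - (1 - r) * ρ * k - ε) := by
      rw [← hδeq]; exact hcδ
    have h3 : 0 ≤ (c * (μF - (1 - r) * ρ * k - ε) - r * ρ * k) * F t :=
      mul_nonneg (by linarith) hF
    linarith [h1, h2, h3]
  -- Gronwall via antitone
  set g : ℝ → ℝ := fun t => (M t + c * F t) * Real.exp (ε * t) with hg
  have hgd : ∀ t, 0 ≤ t → HasDerivAt g
      (((r * ρ * (F t * M t / (M t + γ * MS t)) * Real.exp (-(β * (M t + F t))) - μM * M t)
        + c * ((1 - r) * ρ * (F t * M t / (M t + γ * MS t)) * Real.exp (-(β * (M t + F t))) - μF * F t))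
        * Real.exp (ε * t)
        + (M t + c * F t) * (Real.exp (ε * t) * ε)) t := by
    intro t ht
    have h1 : HasDerivAt (fun t => M t + c * F t)
        ((r * ρ * (F t * M t / (M t + γ * MS t)) * Real.exp (-(β * (M t + F t))) - μM * M t)
        + c * ((1 - r) * ρ * (F t * M t / (M t + γ * MS t)) * Real.exp (-(β * (M t + F t))) - μF * F t)) t :=
      (hdM t ht).add ((hdF t ht).const_mul c)
    have h2 : HasDerivAt (fun t : ℝ => Real.exp (ε * t)) (Real.exp (ε * t) * ε) t := by
      have := ((hasDerivAt_id t).const_mul ε).exp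
      simpa using this
    exact h1.mul h2
  have hAnti : AntitoneOn g (Set.Ici (0:ℝ)) := by
    apply antitoneOn_of_deriv_nonpos (convex_Ici 0)
    · intro t ht
      exact ((hgd t ht).continuousAt).continuousWithinAt
    · intro t ht
      rw [interior_Ici] at ht
      exact ((hgd t (le_of_lt ht)).differentiableAt).differentiableWithinAt
    · intro t ht
      rw [interior_Ici] at ht
      have ht' : 0 ≤ t := le_of_lt ht
      rw [(hgd t ht').deriv]
      have hk1' := key t ht'
      have hexp : 0 < Real.exp (ε * t) := Real.exp_pos _
      linarith [mul_le_mul_of_nonneg_right hk1' hexp.le]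
  refine ⟨M 0 + c * F 0 + 1, by nlinarith [hMnn 0 le_rfl, hFnn 0 le_rfl], ε, hε0, ?_⟩
  intro t ht
  have hg0 : g t ≤ g 0 := hAnti Set.self_mem_Ici ht ht
  have hgt : (M t + c * F t) * Real.exp (ε * t) ≤ M 0 + c * F 0 := by
    have : g 0 = M 0 + c * F 0 := by simp [hg]
    rw [← this]; exact hg0
  have hexp : 0 < Real.exp (ε * t) := Real.exp_pos _
  have hinv : Real.exp (-(ε * t)) = (Real.exp (ε * t))⁻¹ := by
    rw [Real.exp_neg]
  have hMF : M t + F t ≤ M t + c * F t := by nlinarith [hFnn t ht]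
  have hle : M t + c * F t ≤ (M 0 + c * F 0) * Real.exp (-(ε * t)) := by
    rw [hinv, ← div_eq_mul_inv, le_div_iff₀ hexp]
    exact hgt
  have hC : (M 0 + c * F 0) * Real.exp (-(ε * t)) ≤ (M 0 + c * F 0 + 1) * Real.exp (-(ε * t)) := by
    have : 0 < Real.exp (-(ε * t)) := Real.exp_pos _
    nlinarith
  linarith
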